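/- arXiv:1805.08429 — 3 statements merged into one kernel-verified Lean document; each statement's English description precedes it below -/
import Mathlib

section
/- Let V be a finite set of n validators, F ⊆ V the set of Byzantine validators with 3·|F| < n, and let votes : V → Finset(Value) record the set of values each validator prevoted in a given round, with the property that every correct validator v ∈ V \ F satisfies |votes v| ≤ 1 (correct validators prevote at most once per round). If two values B and B' each have a supporter set {v ∈ V | B ∈ votes v}, respectively {v ∈ V | B' ∈ votes v}, of cardinality strictly greater than 2·n/3 (formally 3·card > 2·n), then B = B'. In other words, at most one value can gather more than two thirds of the prevotes in a round. -/
/-- If correct validators prevote at most one value per round,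
then at most one value can gather more than two thirds of the prevotes. -/
theorem at_most_one_two_thirds_value {α Value : Type*} [DecidableEq α] [DecidableEq Value]
    (V F : Finset α) (n : ℕ) (hn : V.card = n)
    (hFV : F ⊆ V) (hF : 3 * F.card < n)
    (votes : α → Finset Value)
    (hcorrect : ∀ v ∈ V, v ∉ F → (votes v).card ≤ 1)
    (B B' : Value)
    (hB : 3 * (V.filter (fun v => B ∈ votes v)).card > 2 * n)
    (hB' : 3 * (V.filter (fun v => B' ∈ votes v)).card > 2 * n) :
    B = B' := by
  set S := V.filter (fun v => B ∈ votes v) with hS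
  set S' := V.filter (fun v => B' ∈ votes v) with hS'
  have hunion : (S ∪ S').card ≤ n := by
    rw [← hn]
    exact Finset.card_le_card (Finset.union_subset (Finset.filter_subset _ _)
      (Finset.filter_subset _ _))
  have hcard : S.card + S'.card = (S ∪ S').card + (S ∩ S').card :=
    (Finset.card_union_add_card_inter S S').symm
  have hinter : F.card < (S ∩ S').card := by omega
  -- there is an element of S ∩ S' outside F
  have hex : ∃ v ∈ S ∩ S', v ∉ F := by
    by_contra h
    push_neg at h
    have : S ∩ S' ⊆ F := h
    exact absurd (Finset.card_le_card this) (by omega)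
  obtain ⟨v, hv, hvF⟩ := hex
  rw [Finset.mem_inter, hS, hS', Finset.mem_filter, Finset.mem_filter] at hv
  obtain ⟨⟨hvV, hvB⟩, _, hvB'⟩ := hv
  by_contra hne
  have : 2 ≤ (votes v).card := by
    have : ({B, B'} : Finset Value) ⊆ votes v := by
      intro x hx
      simp only [Finset.mem_insert, Finset.mem_singleton] at hx
      rcases hx with rfl | rfl <;> assumption
    calc 2 = ({B, B'} : Finset Value).card := (Finset.card_pair hne).symm
    _ ≤ _ := Finset.card_le_card this
  have := hcorrect v hvV hvF
  omega
end

section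
/- Let V be a finite set of n validators, F ⊆ V the set of Byzantine validators, and let X ⊆ V \ F be a set of correct validators with 3·|X| > n. Let votes : V → Finset(Value) record the prevotes of a round, and suppose every validator in X prevotes only the value B, i.e. for every v ∈ X, votes v ⊆ {B}. Then for every value B' ≠ B, the supporter set {v ∈ V | B' ∈ votes v} has cardinality at most 2·n/3 (formally 3·card ≤ 2·n), so no value different from B can gather more than two thirds of the prevotes in that round. -/
/-- If a set `X` of more than one third of the validators
consists of correct validators that prevote only the value `B`, then no
value different from `B` can gather more than two thirds of the prevotes. -/
theorem blocking_set_prevents_other_quorum {α Value : Type*} [DecidableEq α] [DecidableEq Value]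
    (V F X : Finset α) (n : ℕ) (hn : V.card = n)
    (hFV : F ⊆ V) (hX : X ⊆ V \ F) (hXcard : 3 * X.card > n)
    (votes : α → Finset Value) (B : Value)
    (hvotes : ∀ v ∈ X, votes v ⊆ {B}) :
    ∀ B' : Value, B' ≠ B → 3 * (V.filter (fun v => B' ∈ votes v)).card ≤ 2 * n := by
  intro B' hB'
  have hXV : X ⊆ V := hX.trans (Finset.sdiff_subset)
  have hsub : V.filter (fun v => B' ∈ votes v) ⊆ V \ X := by
    intro v hv
    simp only [Finset.mem_filter] at hv
    rw [Finset.mem_sdiff]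
    refine ⟨hv.1, fun hvX => ?_⟩
    have := hvotes v hvX hv.2
    simp at this
    exact hB' this
  have hcard : (V.filter (fun v => B' ∈ votes v)).card ≤ V.card - X.card := by
    calc _ ≤ (V \ X).card := Finset.card_le_card hsub
    _ = V.card - X.card := Finset.card_sdiff_of_subset hXV
  have hXn : X.card ≤ n := hn ▸ Finset.card_le_card hXV
  omega
end

section
/- Let V be a finite set of n validators, F ⊆ V the set of Byzantine validators, and let X ⊆ V \ F be a set of correct validators with 3·|X| > n. Let votes : ℕ → V → Finset(Value) record the prevotes of every round, and fix a round r₀ and a value B such that for every round r ≥ r₀ and every v ∈ X, votes r v ⊆ {B}. Then for every round r ≥ r₀ and every value B' ≠ B, the supporter set {v ∈ V | B' ∈ votes r v} satisfies 3·card ≤ 2·n. Consequently, in every round from r₀ onward, only the value B can gather more than two thirds of the prevotes. -/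
/-- lock persistence, combinatorial content of Lemma 3: if a set
`X` of more than `n/3` correct validators prevotes only `B` in every round
from `r₀` onward, then in every round `r ≥ r₀` no value `B' ≠ B` can reach
the two-thirds prevote threshold. -/
theorem lock_persistence {α Value : Type*} [DecidableEq α] [DecidableEq Value]
    (V F X : Finset α) (n : ℕ) (hn : V.card = n)
    (hFV : F ⊆ V) (hX : X ⊆ V \ F) (hXcard : 3 * X.card > n)
    (votes : ℕ → α → Finset Value) (r₀ : ℕ) (B : Value)
    (hvotes : ∀ r, r₀ ≤ r → ∀ v ∈ X, votes r v ⊆ {B}) :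
    ∀ r, r₀ ≤ r → ∀ B' : Value, B' ≠ B →
      3 * (V.filter (fun v => B' ∈ votes r v)).card ≤ 2 * n := by
  intro r hr B' hB'
  have hsub : V.filter (fun v => B' ∈ votes r v) ⊆ V \ X := by
    intro v hv
    simp only [Finset.mem_filter] at hv
    rw [Finset.mem_sdiff]
    refine ⟨hv.1, fun hvX => ?_⟩
    have := hvotes r hr v hvX hv.2
    simp at this
    exact hB' this
  have hXV : X ⊆ V := hX.trans (Finset.sdiff_subset)
  have h1 : (V.filter (fun v => B' ∈ votes r v)).card ≤ n - X.card := by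
    have := Finset.card_le_card hsub
    rwa [Finset.card_sdiff_of_subset hXV, hn] at this
  have hXn : X.card ≤ n := hn ▸ Finset.card_le_card hXV
  omega
end
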